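/- Let $q \in \mathbb{C}^\times$ not a root of unity and $\lambda \in \mathbb{C}^\times$ with $\lambda \notin \{q^{-n/2} : n \in \mathbb{N}\}$. Consider the quantum plane $A = \mathbb{C}\langle x,y\rangle/(yx-qxy)$ with right action on $R(A) = A$ given by $x^m y^n \blacktriangleleft x = q^n(1 - \lambda q^{(m+n)/2}) x^{m+1} y^n$ and $x^m y^n \blacktriangleleft y = (1 - \lambda q^{(m+n)/2}) x^m y^{n+1}$. Then the complex $0 \to A \xrightarrow{g_2} A \oplus A \xrightarrow{g_1} A \to 0$, with $g_2(a) = (a \blacktriangleleft y, -q\, a \blacktriangleleft x)$ and $g_1(a,b) = a \blacktriangleleft x + b \blacktriangleleft y$, has $\ker g_2 = 0$, $\ker g_1 = \mathrm{im}\, g_2$, and $A/\mathrm{im}\, g_1 \cong \mathbb{C}$ spanned by the class of $1$. -/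

import Mathlib

/-- Let `q` (with fixed square root `s`, `s² = q`) be not a root of
unity and `λ ∈ ℂˣ` with `λ ∉ {q^{-n/2} : n ∈ ℕ}`.  On the quantum plane
`A = ℂ⟨x,y⟩/(yx - qxy)` (with basis `x^m y^n`), consider the right action
`x^m y^n ◁ x = q^n (1 - λ q^{(m+n)/2}) x^{m+1} y^n`,
`x^m y^n ◁ y = (1 - λ q^{(m+n)/2}) x^m y^{n+1}` (given by the operators `Rx`, `Ry`),
and the complex `0 → A → A ⊕ A → A → 0` with `g₂(a) = (a ◁ y, -q (a ◁ x))`,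
`g₁(a,b) = a ◁ x + b ◁ y`.  Then `ker g₂ = 0`, `ker g₁ = im g₂`, and `A / im g₁ ≅ ℂ`,
spanned by the class of `1`. -/
theorem stmt8 {A : Type*} [Ring A] [Algebra ℂ A] (q s lam : ℂ)
    (hq : q ≠ 0) (hroot : ∀ n : ℕ, n ≠ 0 → q ^ n ≠ 1) (hs : s ^ 2 = q)
    (hlam : lam ≠ 0) (hlam' : ∀ n : ℕ, lam ≠ (s ^ n)⁻¹)
    (x y : A) (hrel : y * x = q • (x * y))
    (Bas : Module.Basis (ℕ × ℕ) ℂ A) (hBas : ∀ m n : ℕ, Bas (m, n) = x ^ m * y ^ n)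
    (Rx Ry : A →ₗ[ℂ] A)
    (hRx : ∀ m n : ℕ, Rx (x ^ m * y ^ n) =
      (q ^ n * (1 - lam * s ^ (m + n))) • (x ^ (m + 1) * y ^ n))
    (hRy : ∀ m n : ℕ, Ry (x ^ m * y ^ n) =
      (1 - lam * s ^ (m + n)) • (x ^ m * y ^ (n + 1))) :
    LinearMap.ker (LinearMap.prod Ry (-(q • Rx))) = ⊥ ∧
    LinearMap.ker (Rx ∘ₗ LinearMap.fst ℂ A A + Ry ∘ₗ LinearMap.snd ℂ A A) =
      LinearMap.range (LinearMap.prod Ry (-(q • Rx))) ∧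
    Submodule.span ℂ
        {(LinearMap.range (Rx ∘ₗ LinearMap.fst ℂ A A + Ry ∘ₗ LinearMap.snd ℂ A A)).mkQ 1} =
      (⊤ : Submodule ℂ _) ∧
    (LinearMap.range (Rx ∘ₗ LinearMap.fst ℂ A A + Ry ∘ₗ LinearMap.snd ℂ A A)).mkQ 1 ≠ 0 := by
  classical
  have hs0 : s ≠ 0 := by
    intro h; apply hq; rw [← hs, h]; ring
  have hd0 : ∀ m n : ℕ, (1 : ℂ) - lam * s ^ (m + n) ≠ 0 := by
    intro m n h
    apply hlam' (m + n)
    have h1 : lam * s ^ (m + n) = 1 := by linear_combination -h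
    exact eq_inv_of_mul_eq_one_left h1
  have hc0 : ∀ m n : ℕ, q ^ n * ((1:ℂ) - lam * s ^ (m + n)) ≠ 0 :=
    fun m n => mul_ne_zero (pow_ne_zero _ hq) (hd0 m n)
  have hRxB : ∀ m n : ℕ, Rx (Bas (m, n)) = (q ^ n * (1 - lam * s ^ (m + n))) • Bas (m + 1, n) := by
    intro m n; rw [hBas, hBas, hRx]
  have hRyB : ∀ m n : ℕ, Ry (Bas (m, n)) = (1 - lam * s ^ (m + n)) • Bas (m, n + 1) := by
    intro m n; rw [hBas, hBas, hRy]
  -- repr lemmas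
  have reprRx : ∀ (a : A) (m n : ℕ), Bas.repr (Rx a) (m + 1, n)
      = q ^ n * (1 - lam * s ^ (m + n)) * Bas.repr a (m, n) := by
    intro a m n
    have h : (Finsupp.lapply (m + 1, n) : (ℕ × ℕ →₀ ℂ) →ₗ[ℂ] ℂ) ∘ₗ (Bas.repr.toLinearMap ∘ₗ Rx)
        = (q ^ n * (1 - lam * s ^ (m + n))) •
          ((Finsupp.lapply (m, n) : (ℕ × ℕ →₀ ℂ) →ₗ[ℂ] ℂ) ∘ₗ Bas.repr.toLinearMap) := by
      apply Bas.ext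
      rintro ⟨i, j⟩
      simp only [LinearMap.comp_apply, LinearEquiv.coe_coe, hRxB, map_smul, Module.Basis.repr_self,
        Finsupp.lapply_apply, Finsupp.smul_apply, Finsupp.single_apply, LinearMap.smul_apply,
        smul_eq_mul]
      by_cases hij : ((i : ℕ), (j : ℕ)) = ((m : ℕ), (n : ℕ))
      · obtain ⟨rfl, rfl⟩ := Prod.mk.injEq _ _ _ _ ▸ hij
        simp
      · rw [if_neg (by simpa [Prod.ext_iff] using hij), if_neg hij, mul_zero, mul_zero]
    simpa using LinearMap.congr_fun h a
  have reprRx0 : ∀ (a : A) (n : ℕ), Bas.repr (Rx a) (0, n) = 0 := by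
    intro a n
    have h : (Finsupp.lapply (0, n) : (ℕ × ℕ →₀ ℂ) →ₗ[ℂ] ℂ) ∘ₗ (Bas.repr.toLinearMap ∘ₗ Rx)
        = 0 := by
      apply Bas.ext
      rintro ⟨i, j⟩
      simp only [LinearMap.comp_apply, LinearEquiv.coe_coe, hRxB, map_smul, Module.Basis.repr_self,
        Finsupp.lapply_apply, Finsupp.smul_apply, Finsupp.single_apply, LinearMap.zero_apply,
        smul_eq_mul]
      rw [if_neg (by simp [Prod.ext_iff]), mul_zero]
    simpa using LinearMap.congr_fun h a
  have reprRy : ∀ (a : A) (m n : ℕ), Bas.repr (Ry a) (m, n + 1)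
      = (1 - lam * s ^ (m + n)) * Bas.repr a (m, n) := by
    intro a m n
    have h : (Finsupp.lapply (m, n + 1) : (ℕ × ℕ →₀ ℂ) →ₗ[ℂ] ℂ) ∘ₗ (Bas.repr.toLinearMap ∘ₗ Ry)
        = (1 - lam * s ^ (m + n)) •
          ((Finsupp.lapply (m, n) : (ℕ × ℕ →₀ ℂ) →ₗ[ℂ] ℂ) ∘ₗ Bas.repr.toLinearMap) := by
      apply Bas.ext
      rintro ⟨i, j⟩
      simp only [LinearMap.comp_apply, LinearEquiv.coe_coe, hRyB, map_smul, Module.Basis.repr_self,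
        Finsupp.lapply_apply, Finsupp.smul_apply, Finsupp.single_apply, LinearMap.smul_apply,
        smul_eq_mul]
      by_cases hij : ((i : ℕ), (j : ℕ)) = ((m : ℕ), (n : ℕ))
      · obtain ⟨rfl, rfl⟩ := Prod.mk.injEq _ _ _ _ ▸ hij
        simp
      · rw [if_neg (by simpa [Prod.ext_iff] using hij), if_neg hij, mul_zero, mul_zero]
    simpa using LinearMap.congr_fun h a
  have reprRy0 : ∀ (a : A) (m : ℕ), Bas.repr (Ry a) (m, 0) = 0 := by
    intro a m
    have h : (Finsupp.lapply (m, 0) : (ℕ × ℕ →₀ ℂ) →ₗ[ℂ] ℂ) ∘ₗ (Bas.repr.toLinearMap ∘ₗ Ry)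
        = 0 := by
      apply Bas.ext
      rintro ⟨i, j⟩
      simp only [LinearMap.comp_apply, LinearEquiv.coe_coe, hRyB, map_smul, Module.Basis.repr_self,
        Finsupp.lapply_apply, Finsupp.smul_apply, Finsupp.single_apply, LinearMap.zero_apply,
        smul_eq_mul]
      rw [if_neg (by simp [Prod.ext_iff]), mul_zero]
    simpa using LinearMap.congr_fun h a
  -- injectivity of Ry
  have RyInj : Function.Injective Ry := by
    rw [← LinearMap.ker_eq_bot]
    rw [LinearMap.ker_eq_bot']
    intro a ha
    apply Bas.repr.injective
    ext p
    obtain ⟨m, n⟩ := p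
    have := reprRy a m n
    rw [ha] at this
    simp only [map_zero, Finsupp.zero_apply] at this ⊢
    have := (mul_eq_zero.mp this.symm).resolve_left (hd0 m n)
    exact this
  -- commutation Rx ∘ Ry = q • (Ry ∘ Rx)
  have comm : Rx ∘ₗ Ry = q • (Ry ∘ₗ Rx) := by
    apply Bas.ext
    rintro ⟨m, n⟩
    simp only [LinearMap.comp_apply, LinearMap.smul_apply, hRxB, hRyB, map_smul, smul_smul]
    congr 1
    ring_nf
  have hone : (1 : A) = Bas (0, 0) := by rw [hBas]; simp
  refine ⟨?_, ?_, ?_, ?_⟩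
  · -- ker g₂ = ⊥
    rw [LinearMap.ker_eq_bot']
    intro a ha
    have h1 : Ry a = 0 := congrArg Prod.fst ha
    exact RyInj (by rw [h1, map_zero])
  · -- ker g₁ = range g₂
    apply le_antisymm
    · rintro ⟨a, b⟩ hab
      simp only [LinearMap.mem_ker, LinearMap.add_apply, LinearMap.coe_comp,
        Function.comp_apply, LinearMap.fst_apply, LinearMap.snd_apply] at hab
      have habn : Rx a = -(Ry b) := eq_neg_of_add_eq_zero_left hab
      have han0 : ∀ m : ℕ, Bas.repr a (m, 0) = 0 := by
        intro m
        have h1 : Bas.repr (Rx a) (m + 1, 0) = 0 := by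
          rw [habn, map_neg]
          simp [reprRy0]
        rw [reprRx a m 0] at h1
        exact (mul_eq_zero.mp h1).resolve_left (hc0 m 0)
      set g : ℕ × ℕ → ℂ :=
        fun p => (1 - lam * s ^ (p.1 + p.2))⁻¹ * Bas.repr a (p.1, p.2 + 1) with hg
      have hgsupp : ∀ p : ℕ × ℕ, g p ≠ 0 →
          p ∈ (Bas.repr a).support.image (fun p : ℕ × ℕ => (p.1, p.2 - 1)) := by
        intro p hp
        simp only [Finset.mem_image, Finsupp.mem_support_iff]
        refine ⟨(p.1, p.2 + 1), ?_, by simp⟩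
        intro h
        exact hp (by rw [hg]; simp [h])
      set w : A := Bas.repr.symm (Finsupp.onFinset _ g hgsupp) with hwdef
      have hw : ∀ p : ℕ × ℕ, Bas.repr w p = g p := by
        intro p; rw [hwdef, Bas.repr.apply_symm_apply]; rfl
      have hya : Ry w = a := by
        apply Bas.repr.injective
        ext ⟨m, n⟩
        cases n with
        | zero => rw [reprRy0, han0]
        | succ n =>
          rw [reprRy w m n, hw (m, n), hg]
          simp only []
          rw [← mul_assoc, mul_inv_cancel₀ (hd0 m n), one_mul]
      have hcw := LinearMap.congr_fun comm w
      simp only [LinearMap.comp_apply, LinearMap.smul_apply] at hcw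
      refine ⟨w, ?_⟩
      have hb : (-(q • Rx)) w = b := by
        apply RyInj
        simp only [LinearMap.neg_apply, LinearMap.smul_apply]
        rw [map_neg, map_smul, ← hcw, hya, habn, neg_neg]
      rw [LinearMap.prod_apply]
      exact Prod.ext hya hb
    · rintro ab ⟨w, rfl⟩
      simp only [LinearMap.mem_ker, LinearMap.prod_apply, Function.prod, LinearMap.add_apply,
        LinearMap.coe_comp, Function.comp_apply, LinearMap.fst_apply, LinearMap.snd_apply,
        LinearMap.neg_apply, LinearMap.smul_apply]
      have hcw := LinearMap.congr_fun comm w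
      simp only [LinearMap.comp_apply, LinearMap.smul_apply] at hcw
      rw [map_neg, map_smul, ← hcw]
      simp
  · -- span of mkQ 1 is top
    set K := LinearMap.range (Rx ∘ₗ LinearMap.fst ℂ A A + Ry ∘ₗ LinearMap.snd ℂ A A) with hK
    have hmemx : ∀ m n : ℕ, Bas (m + 1, n) ∈ K := by
      intro m n
      refine ⟨((q ^ n * (1 - lam * s ^ (m + n)))⁻¹ • Bas (m, n), 0), ?_⟩
      simp only [LinearMap.add_apply, LinearMap.coe_comp, Function.comp_apply,
        LinearMap.fst_apply, LinearMap.snd_apply, map_smul, map_zero, add_zero]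
      rw [hRxB, smul_smul, inv_mul_cancel₀ (hc0 m n), one_smul]
    have hmemy : ∀ m n : ℕ, Bas (m, n + 1) ∈ K := by
      intro m n
      refine ⟨(0, (1 - lam * s ^ (m + n))⁻¹ • Bas (m, n)), ?_⟩
      simp only [LinearMap.add_apply, LinearMap.coe_comp, Function.comp_apply,
        LinearMap.fst_apply, LinearMap.snd_apply, map_smul, map_zero, zero_add]
      rw [hRyB, smul_smul, inv_mul_cancel₀ (hd0 m n), one_smul]
    have hball : ∀ p : ℕ × ℕ, K.mkQ (Bas p) ∈ Submodule.span ℂ {K.mkQ 1} := by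
      rintro ⟨m, n⟩
      match m, n with
      | 0, 0 =>
        rw [← hone]
        exact Submodule.mem_span_singleton_self _
      | m + 1, n =>
        have h0 : K.mkQ (Bas (m + 1, n)) = 0 := by
          rw [Submodule.mkQ_apply, Submodule.Quotient.mk_eq_zero]
          exact hmemx m n
        rw [h0]; exact Submodule.zero_mem _
      | 0, n + 1 =>
        have h0 : K.mkQ (Bas (0, n + 1)) = 0 := by
          rw [Submodule.mkQ_apply, Submodule.Quotient.mk_eq_zero]
          exact hmemy 0 n
        rw [h0]; exact Submodule.zero_mem _
    refine le_antisymm le_top ?_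
    calc (⊤ : Submodule ℂ (A ⧸ K)) = Submodule.map K.mkQ ⊤ := by
            rw [Submodule.map_top, Submodule.range_mkQ]
      _ = Submodule.map K.mkQ (Submodule.span ℂ (Set.range Bas)) := by rw [Bas.span_eq]
      _ = Submodule.span ℂ (K.mkQ '' Set.range Bas) := Submodule.map_span _ _
      _ ≤ Submodule.span ℂ {K.mkQ 1} := Submodule.span_le.mpr
            (by rintro _ ⟨_, ⟨p, rfl⟩, rfl⟩; exact hball p)
  · -- mkQ 1 ≠ 0
    intro h0
    rw [Submodule.mkQ_apply, Submodule.Quotient.mk_eq_zero] at h0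
    obtain ⟨⟨u, v⟩, huv⟩ := h0
    simp only [LinearMap.add_apply, LinearMap.coe_comp, Function.comp_apply,
      LinearMap.fst_apply, LinearMap.snd_apply] at huv
    have h1 := congrArg (fun z => Bas.repr z (0, 0)) huv
    simp only [map_add, Finsupp.add_apply] at h1
    rw [reprRx0, reprRy0, hone] at h1
    simp [Module.Basis.repr_self] at h1
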